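/- Let G be a persistent graph on {1,...,n}, let Ĝ be its extension by universal vertices 0 and n+1, and for an edge e = {v,w} (v < w) of G define ξ(e) = {ℓ(e), v, w, r(e)} where ℓ(e) = max{ i < v : {i,w} ∈ E(Ĝ) } and r(e) = min{ i > w : {v,i} ∈ E(Ĝ) }. Then for any edge e of G, if a < b < c are three of the four vertices of ξ(e), there is no edge {x,y} of G with a < x < b < y < c. -/

import Mathlib

/-- A graph on the ordered vertex set `Fin n` (representing `{1,…,n}`) is *persistent* if it
contains the Hamilton path `1,…,n`, satisfies the X-property and the bar-property. -/
def IsPersistent {n : ℕ} (G : SimpleGraph (Fin n)) : Prop :=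
  (∀ i j : Fin n, (i : ℕ) + 1 = (j : ℕ) → G.Adj i j) ∧
  (∀ a b c d : Fin n, a < b → b < c → c < d → G.Adj a c → G.Adj b d → G.Adj a d) ∧
  (∀ a b : Fin n, (a : ℕ) + 1 < (b : ℕ) → G.Adj a b →
    ∃ x : Fin n, a < x ∧ x < b ∧ G.Adj a x ∧ G.Adj x b)

/-- The extension `Ĝ` of `G` by two universal vertices `0` and `n+1`.  Vertices of `G`
(elements of `Fin n`, representing `1,…,n`) are embedded into `Fin (n+2)` via `v ↦ v+1`. -/
def extendGraph (n : ℕ) (G : SimpleGraph (Fin n)) : SimpleGraph (Fin (n + 2)) where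
  Adj u v := u ≠ v ∧ ((u : ℕ) = 0 ∨ (u : ℕ) = n + 1 ∨ (v : ℕ) = 0 ∨ (v : ℕ) = n + 1 ∨
    ∃ a b : Fin n, G.Adj a b ∧
      (((a : ℕ) + 1 = (u : ℕ) ∧ (b : ℕ) + 1 = (v : ℕ)) ∨
       ((a : ℕ) + 1 = (v : ℕ) ∧ (b : ℕ) + 1 = (u : ℕ))))
  symm := by
    constructor
    rintro u v ⟨h1, h2⟩
    refine ⟨h1.symm, ?_⟩
    rcases h2 with h | h | h | h | ⟨a, b, hab, hc⟩
    · tauto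
    · tauto
    · tauto
    · tauto
    · exact Or.inr (Or.inr (Or.inr (Or.inr ⟨b, a, hab.symm, by tauto⟩)))
  loopless := by constructor; rintro u ⟨h, _⟩; exact h rfl

lemma hatAdj {n : ℕ} (G : SimpleGraph (Fin n)) {p q : Fin n} (h : G.Adj p q)
    (P Q : Fin (n + 2)) (hP : (P : ℕ) = (p : ℕ) + 1) (hQ : (Q : ℕ) = (q : ℕ) + 1) :
    (extendGraph n G).Adj P Q := by
  refine ⟨?_, Or.inr (Or.inr (Or.inr (Or.inr ⟨p, q, h, Or.inl ⟨hP.symm, hQ.symm⟩⟩)))⟩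
  intro e
  apply h.ne
  apply Fin.val_injective
  have := congrArg Fin.val e
  omega

lemma noCrossMain {n : ℕ} (G : SimpleGraph (Fin n))
    (hX : ∀ a b c d : Fin n, a < b → b < c → c < d → G.Adj a c → G.Adj b d → G.Adj a d)
    (hbar : ∀ a b : Fin n, (a : ℕ) + 1 < (b : ℕ) → G.Adj a b →
      ∃ x : Fin n, a < x ∧ x < b ∧ G.Adj a x ∧ G.Adj x b)
    (v w : Fin n) (he : G.Adj v w)
    (V W L R : Fin (n + 2)) (hV : (V : ℕ) = (v : ℕ) + 1) (hW : (W : ℕ) = (w : ℕ) + 1)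
    (hLmax : ∀ i : Fin (n + 2), i < V → (extendGraph n G).Adj i W → i ≤ L)
    (hRmin : ∀ i : Fin (n + 2), W < i → (extendGraph n G).Adj V i → R ≤ i) :
    ∀ d : ℕ, ∀ x y : Fin n, (y : ℕ) - (x : ℕ) ≤ d → G.Adj x y →
      (x : ℕ) < (w : ℕ) → (w : ℕ) < (y : ℕ) → (L : ℕ) < (x : ℕ) + 1 →
      (y : ℕ) + 1 < (R : ℕ) → False := by
  intro d
  induction d with
  | zero => intro x y hd _ hxw hwy _ _; omega
  | succ d ih =>
    intro x y hd hxy hxw hwy hLx hyR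
    rcases lt_trichotomy (x : ℕ) (v : ℕ) with hxv | hxv | hxv
    · obtain ⟨z, hz1, hz2, hxz, hzy⟩ := hbar x y (by omega) hxy
      have hz1' : (x : ℕ) < (z : ℕ) := hz1
      have hz2' : (z : ℕ) < (y : ℕ) := hz2
      rcases lt_trichotomy (z : ℕ) (w : ℕ) with hzw | hzw | hzw
      · exact ih z y (by omega) hzy hzw hwy (by omega) hyR
      · have hzwF : z = w := Fin.val_injective hzw
        have hAdj : (extendGraph n G).Adj ⟨(x : ℕ) + 1, by have := x.isLt; omega⟩ W :=
          hatAdj G (hzwF ▸ hxz) _ W rfl hW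
        have h1 := hLmax ⟨(x : ℕ) + 1, by have := x.isLt; omega⟩
          (by rw [Fin.lt_def]; exact (show (x : ℕ) + 1 < (V : ℕ) by omega)) hAdj
        have h2 : (x : ℕ) + 1 ≤ (L : ℕ) := Fin.le_def.mp h1
        omega
      · exact ih x z (by omega) hxz hxw hzw hLx (by omega)
    · have hxvF : x = v := Fin.val_injective hxv
      have hAdj : (extendGraph n G).Adj V ⟨(y : ℕ) + 1, by have := y.isLt; omega⟩ :=
        hatAdj G (hxvF ▸ hxy) V _ hV rfl
      have h1 := hRmin ⟨(y : ℕ) + 1, by have := y.isLt; omega⟩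
        (by rw [Fin.lt_def]; exact (show (W : ℕ) < (y : ℕ) + 1 by omega)) hAdj
      have h2 : (R : ℕ) ≤ (y : ℕ) + 1 := Fin.le_def.mp h1
      omega
    · have hvy : G.Adj v y := hX v x w y (Fin.lt_def.mpr hxv) (Fin.lt_def.mpr hxw)
        (Fin.lt_def.mpr hwy) he hxy
      have hAdj : (extendGraph n G).Adj V ⟨(y : ℕ) + 1, by have := y.isLt; omega⟩ :=
        hatAdj G hvy V _ hV rfl
      have h1 := hRmin ⟨(y : ℕ) + 1, by have := y.isLt; omega⟩
        (by rw [Fin.lt_def]; exact (show (W : ℕ) < (y : ℕ) + 1 by omega)) hAdj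
      have h2 : (R : ℕ) ≤ (y : ℕ) + 1 := Fin.le_def.mp h1
      omega

set_option maxHeartbeats 2000000 in
/-- if `a < b < c` are three of the four vertices of the 3-simplex
`ξ(e) = {ℓ(e), v, w, r(e)}` associated with an edge `e = {v,w}` of `G`, then `G` contains
no edge `{x,y}` with `a < x < b < y < c` (vertices of `G` compared via their images in `Ĝ`). -/
theorem xi_no_crossing {n : ℕ} (G : SimpleGraph (Fin n)) (hG : IsPersistent G)
    (v w : Fin n) (hvw : v < w) (he : G.Adj v w)
    (V W L R : Fin (n + 2)) (hV : (V : ℕ) = (v : ℕ) + 1) (hW : (W : ℕ) = (w : ℕ) + 1)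
    (hLV : L < V) (hLW : (extendGraph n G).Adj L W)
    (hLmax : ∀ i : Fin (n + 2), i < V → (extendGraph n G).Adj i W → i ≤ L)
    (hWR : W < R) (hVR : (extendGraph n G).Adj V R)
    (hRmin : ∀ i : Fin (n + 2), W < i → (extendGraph n G).Adj V i → R ≤ i)
    (a b c : Fin (n + 2)) (ha : a ∈ ({L, V, W, R} : Set (Fin (n + 2))))
    (hb : b ∈ ({L, V, W, R} : Set (Fin (n + 2))))
    (hc : c ∈ ({L, V, W, R} : Set (Fin (n + 2))))
    (hab : a < b) (hbc : b < c) :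
    ¬ ∃ x y : Fin n, G.Adj x y ∧
        (a : ℕ) < (x : ℕ) + 1 ∧ (x : ℕ) + 1 < (b : ℕ) ∧
        (b : ℕ) < (y : ℕ) + 1 ∧ (y : ℕ) + 1 < (c : ℕ) := by
  obtain ⟨hpath, hX, hbar⟩ := hG
  rintro ⟨x, y, hxy, h1, h2, h3, h4⟩
  have hvw' : (v : ℕ) < (w : ℕ) := Fin.lt_def.mp hvw
  have hLV' : (L : ℕ) < (V : ℕ) := Fin.lt_def.mp hLV
  have hWR' : (W : ℕ) < (R : ℕ) := Fin.lt_def.mp hWR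
  have hab' : (a : ℕ) < (b : ℕ) := Fin.lt_def.mp hab
  have hbc' : (b : ℕ) < (c : ℕ) := Fin.lt_def.mp hbc
  have contraL : ∀ x : Fin n, (x : ℕ) < (v : ℕ) → G.Adj x w → (x : ℕ) + 1 ≤ (L : ℕ) := by
    intro x hx hadj
    have hP : (extendGraph n G).Adj ⟨(x : ℕ) + 1, by have := x.isLt; omega⟩ W :=
      hatAdj G hadj _ W rfl hW
    have := hLmax ⟨(x : ℕ) + 1, by have := x.isLt; omega⟩
      (by rw [Fin.lt_def]; exact (show (x : ℕ) + 1 < (V : ℕ) by omega)) hP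
    exact Fin.le_def.mp this
  have contraR : ∀ y : Fin n, (w : ℕ) < (y : ℕ) → G.Adj v y → (R : ℕ) ≤ (y : ℕ) + 1 := by
    intro y hy hadj
    have hP : (extendGraph n G).Adj V ⟨(y : ℕ) + 1, by have := y.isLt; omega⟩ :=
      hatAdj G hadj V _ hV rfl
    have := hRmin ⟨(y : ℕ) + 1, by have := y.isLt; omega⟩
      (by rw [Fin.lt_def]; exact (show (W : ℕ) < (y : ℕ) + 1 by omega)) hP
    exact Fin.le_def.mp this
  have main := noCrossMain G hX hbar v w he V W L R hV hW hLmax hRmin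
  have ha' : (a : ℕ) = (L : ℕ) ∨ (a : ℕ) = (V : ℕ) ∨ (a : ℕ) = (W : ℕ) ∨ (a : ℕ) = (R : ℕ) := by
    simp only [Set.mem_insert_iff, Set.mem_singleton_iff] at ha
    rcases ha with rfl | rfl | rfl | rfl <;> tauto
  have hb' : (b : ℕ) = (L : ℕ) ∨ (b : ℕ) = (V : ℕ) ∨ (b : ℕ) = (W : ℕ) ∨ (b : ℕ) = (R : ℕ) := by
    simp only [Set.mem_insert_iff, Set.mem_singleton_iff] at hb
    rcases hb with rfl | rfl | rfl | rfl <;> tauto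
  have hc' : (c : ℕ) = (L : ℕ) ∨ (c : ℕ) = (V : ℕ) ∨ (c : ℕ) = (W : ℕ) ∨ (c : ℕ) = (R : ℕ) := by
    simp only [Set.mem_insert_iff, Set.mem_singleton_iff] at hc
    rcases hc with rfl | rfl | rfl | rfl <;> tauto
  rcases ha' with h | h | h | h <;> rcases hb' with h' | h' | h' | h' <;>
    rcases hc' with h'' | h'' | h'' | h'' <;>
  first
  | omega
  | -- case (L, V, W)
    (have hxv : (x : ℕ) < (v : ℕ) := by omega
     have hvy : (v : ℕ) < (y : ℕ) := by omega
     have hyw : (y : ℕ) < (w : ℕ) := by omega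
     have hxw : G.Adj x w := hX x v y w (Fin.lt_def.mpr hxv) (Fin.lt_def.mpr hvy)
       (Fin.lt_def.mpr hyw) hxy he
     have := contraL x hxv hxw
     omega)
  | -- case (L, V, R)
    (have hxv : (x : ℕ) < (v : ℕ) := by omega
     have hvy : (v : ℕ) < (y : ℕ) := by omega
     have hLx : (L : ℕ) < (x : ℕ) + 1 := by omega
     have hyR : (y : ℕ) + 1 < (R : ℕ) := by omega
     rcases lt_trichotomy (y : ℕ) (w : ℕ) with hyw | hyw | hyw
     · have hxw : G.Adj x w := hX x v y w (Fin.lt_def.mpr hxv) (Fin.lt_def.mpr hvy)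
         (Fin.lt_def.mpr hyw) hxy he
       have := contraL x hxv hxw
       omega
     · have hyw' : y = w := Fin.val_injective hyw
       have := contraL x hxv (hyw' ▸ hxy)
       omega
     · exact main ((y : ℕ) - (x : ℕ)) x y le_rfl hxy (by omega) hyw hLx hyR)
  | -- case (L, W, R)
    (exact main ((y : ℕ) - (x : ℕ)) x y le_rfl hxy (by omega) (by omega) (by omega) (by omega))
  | -- case (V, W, R)
    (have hvx : (v : ℕ) < (x : ℕ) := by omega
     have hxw : (x : ℕ) < (w : ℕ) := by omega
     have hwy : (w : ℕ) < (y : ℕ) := by omega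
     have hadj := hX v x w y (Fin.lt_def.mpr hvx) (Fin.lt_def.mpr hxw)
       (Fin.lt_def.mpr hwy) he hxy
     have := contraR y hwy hadj
     omega)
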